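/- arXiv:0802.1703 — 2 statements merged into one kernel-verified Lean document; each statement's English description precedes it below -/
import Mathlib

section
/- Let u ∈ Int P and set z̄_i(u) = T^{ℓ_i(u)} y_1^{v_{i,1}} ⋯ y_n^{v_{i,n}} ∈ Λ^ℂ[y_1^{±1}, …, y_n^{±1}]. Then the assignment z_i ↦ z̄_i(u) induces a well-defined ring isomorphism Λ^ℂ[z_1, …, z_m]/SR_ω(X) → Λ^ℂ[y_1^{±1}, …, y_n^{±1}]. -/
noncomputable section

open scoped Classical Pointwise

/-- Auxiliary: the sum of two subsets of `ℝ` each of which meets every interval `(-∞, C]`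
in a finite set again has this property. -/
theorem add_inter_Iic_finite {A B : Set ℝ}
    (hA : ∀ C : ℝ, (A ∩ Set.Iic C).Finite) (hB : ∀ C : ℝ, (B ∩ Set.Iic C).Finite) :
    ∀ C : ℝ, ((A + B) ∩ Set.Iic C).Finite := by
  intro C
  rcases Set.eq_empty_or_nonempty A with hAe | ⟨a₀, ha₀⟩
  · simp [hAe]
  rcases Set.eq_empty_or_nonempty B with hBe | ⟨b₀, hb₀⟩
  · simp [hBe]
  obtain ⟨a₁, ha₁A, ha₁⟩ : ∃ a₁ ∈ A, ∀ a ∈ A, a₁ ≤ a := by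
    obtain ⟨a₁, h₁, h₂⟩ := Set.exists_min_image _ id (hA a₀) ⟨a₀, ha₀, Set.self_mem_Iic⟩
    refine ⟨a₁, h₁.1, fun a ha => ?_⟩
    by_cases hle : a ≤ a₀
    · exact h₂ a ⟨ha, hle⟩
    · exact le_trans (h₂ a₀ ⟨ha₀, Set.self_mem_Iic⟩) (le_of_not_ge hle)
  obtain ⟨b₁, hb₁B, hb₁⟩ : ∃ b₁ ∈ B, ∀ b ∈ B, b₁ ≤ b := by
    obtain ⟨b₁, h₁, h₂⟩ := Set.exists_min_image _ id (hB b₀) ⟨b₀, hb₀, Set.self_mem_Iic⟩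
    refine ⟨b₁, h₁.1, fun b hb => ?_⟩
    by_cases hle : b ≤ b₀
    · exact h₂ b ⟨hb, hle⟩
    · exact le_trans (h₂ b₀ ⟨hb₀, Set.self_mem_Iic⟩) (le_of_not_ge hle)
  have hsub : (A + B) ∩ Set.Iic C ⊆
      (fun p : ℝ × ℝ => p.1 + p.2) '' ((A ∩ Set.Iic (C - b₁)) ×ˢ (B ∩ Set.Iic (C - a₁))) := by
    rintro r ⟨hr, hrC⟩
    rw [Set.mem_add] at hr
    obtain ⟨a, ha, b, hb, rfl⟩ := hr
    have hC : a + b ≤ C := hrC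
    exact ⟨(a, b), ⟨⟨ha, by have := hb₁ b hb; simp only [Set.mem_Iic]; linarith⟩,
      ⟨hb, by have := ha₁ a ha; simp only [Set.mem_Iic]; linarith⟩⟩, rfl⟩
  exact Set.Finite.subset (Set.Finite.image _ (Set.Finite.prod (hA _) (hB _))) hsub

variable (F : Type*) [Field F]

/-- The universal Novikov field `Λ^F`: the subring of Hahn series over `ℝ` with coefficients
in `F` whose support meets every interval `(-∞, C]` in a finite set.  (Formal sums
`Σ aᵢ T^{λᵢ}` with `λᵢ → ∞`.) -/
def Novikov : Subring (HahnSeries ℝ F) where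
  carrier := {s | ∀ C : ℝ, (s.support ∩ Set.Iic C).Finite}
  zero_mem' := by intro C; simp [HahnSeries.support_zero]
  one_mem' := by
    intro C
    refine Set.Finite.subset (Set.finite_singleton (0 : ℝ)) ?_
    intro r hr
    have h1 : (1 : HahnSeries ℝ F).coeff r ≠ 0 := hr.1
    rw [HahnSeries.coeff_one] at h1
    by_contra hne
    simp only [Set.mem_singleton_iff] at hne
    simp [hne] at h1
  add_mem' := by
    intro a b ha hb C
    refine Set.Finite.subset ((ha C).union (hb C)) ?_
    intro r hr
    rcases HahnSeries.support_add_subset _ _ hr.1 with h | h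
    · exact Or.inl ⟨h, hr.2⟩
    · exact Or.inr ⟨h, hr.2⟩
  neg_mem' := by
    intro a ha C
    refine Set.Finite.subset (ha C) ?_
    intro r hr
    rw [HahnSeries.support_neg] at hr
    exact hr
  mul_mem' := by
    intro a b ha hb C
    refine Set.Finite.subset (add_inter_Iic_finite ha hb C) ?_
    intro r hr
    exact ⟨HahnSeries.support_mul_subset hr.1, hr.2⟩

/-- The element `T^c` of the universal Novikov field. -/
def NovikovT (c : ℝ) : Novikov F :=
  ⟨HahnSeries.single c 1, by
    intro C
    refine Set.Finite.subset (Set.finite_singleton c) ?_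
    intro r hr
    exact HahnSeries.support_single_subset hr.1⟩

/-- The constant element `c·T^0` of the universal Novikov field. -/
def NovikovC (c : F) : Novikov F :=
  ⟨HahnSeries.single (0 : ℝ) c, by
    intro C
    refine Set.Finite.subset (Set.finite_singleton (0 : ℝ)) ?_
    intro r hr
    exact HahnSeries.support_single_subset hr.1⟩

variable {F}

/-- Membership in `Λ₀^F ⊆ Λ^F`: all exponents are `≥ 0`. -/
def MemLambda0 (x : Novikov F) : Prop :=
  ∀ r : ℝ, r < 0 → (x : HahnSeries ℝ F).coeff r = 0

/-- Membership in `Λ₊^F ⊆ Λ₀^F`: all exponents are `> 0`. -/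
def MemLambdaPlus (x : Novikov F) : Prop :=
  ∀ r : ℝ, r ≤ 0 → (x : HahnSeries ℝ F).coeff r = 0


/-- The affine functions `ℓᵢ(u) = ⟨u, vᵢ⟩ - λᵢ` attached to a moment polytope. -/
def ell (n m : ℕ) (v : Fin m → Fin n → ℤ) (lam : Fin m → ℝ) (i : Fin m) (u : Fin n → ℝ) : ℝ :=
  (∑ j, u j * (v i j : ℝ)) - lam i

/-- The polytope `P = {u | ℓᵢ(u) ≥ 0 for all i}`. -/
def moment (n m : ℕ) (v : Fin m → Fin n → ℤ) (lam : Fin m → ℝ) : Set (Fin n → ℝ) :=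
  {u | ∀ i, 0 ≤ ell n m v lam i u}


/-- The facet `∂ᵢP = {u ∈ P | ℓᵢ(u) = 0}`. -/
def facet (n m : ℕ) (v : Fin m → Fin n → ℤ) (lam : Fin m → ℝ) (i : Fin m) :
    Set (Fin n → ℝ) :=
  {u ∈ moment n m v lam | ell n m v lam i u = 0}

/-- A subset `S ⊆ {1, …, m}` spans a cone of the normal fan iff `⋂_{i ∈ S} ∂ᵢP ≠ ∅`. -/
def SpansCone (n m : ℕ) (v : Fin m → Fin n → ℤ) (lam : Fin m → ℝ)
    (Sc : Finset (Fin m)) : Prop :=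
  (⋂ i ∈ Sc, facet n m v lam i).Nonempty

/-- A primitive collection: a subset which does not span a cone of the normal fan while
every proper subset does. -/
def IsPrimitiveCollection (n m : ℕ) (v : Fin m → Fin n → ℤ) (lam : Fin m → ℝ)
    (Pc : Finset (Fin m)) : Prop :=
  ¬ SpansCone n m v lam Pc ∧ ∀ Sc ⊂ Pc, SpansCone n m v lam Sc

/-- `P` is a (compact) Delzant polytope: every facet has dimension `n - 1`, and at every
vertex exactly `n` facets meet, whose normal vectors form a `ℤ`-basis of `ℤⁿ`. -/
def IsDelzant (n m : ℕ) (v : Fin m → Fin n → ℤ) (lam : Fin m → ℝ) : Prop :=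
  IsCompact (moment n m v lam) ∧ (interior (moment n m v lam)).Nonempty ∧
  (∀ i, Module.finrank ℝ (affineSpan ℝ (facet n m v lam i)).direction = n - 1) ∧
  ∀ u ∈ Set.extremePoints ℝ (moment n m v lam),
    ∃ σ : Fin n → Fin m, Function.Injective σ ∧
      {i | ell n m v lam i u = 0} = Set.range σ ∧
      IsUnit (Matrix.det (Matrix.of fun a b : Fin n => v (σ a) b))

/-- The universal Novikov field over `ℂ`, as a type. -/
def Lam : Type := ↥(Novikov ℂ)

instance : CommRing Lam := inferInstanceAs (CommRing ↥(Novikov ℂ))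

/-- The element `T^c` of `Λ^ℂ`. -/
def TPow (c : ℝ) : Lam := NovikovT ℂ c

/-- The generators `z(𝒫) = Π_{i∈𝒫} zᵢ - T^{ω(𝒫)} Π_{i'∈𝒫'} z_{i'}^{k_{i'}}` of the quantum
Stanley–Reisner ideal.  Here `ω(𝒫) = Σ_{i∈𝒫} ℓᵢ(u) - Σ_{i'∈𝒫'} k_{i'} ℓ_{i'}(u)`, which is
independent of `u` and equals `Σ_{i'∈𝒫'} k_{i'} λ_{i'} - Σ_{i∈𝒫} λᵢ`. -/
def SRgens (n m : ℕ) (v : Fin m → Fin n → ℤ) (lam : Fin m → ℝ) :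
    Set (MvPolynomial (Fin m) Lam) :=
  {q | ∃ (Pc Pc' : Finset (Fin m)) (k : Fin m → ℕ),
    IsPrimitiveCollection n m v lam Pc ∧ SpansCone n m v lam Pc' ∧
    (∀ i ∈ Pc', 0 < k i) ∧
    (∀ j, (∑ i ∈ Pc, v i j) = ∑ i ∈ Pc', (k i : ℤ) * v i j) ∧
    q = (∏ i ∈ Pc, MvPolynomial.X i) -
        MvPolynomial.C (TPow ((∑ i ∈ Pc', (k i : ℝ) * lam i) - ∑ i ∈ Pc, lam i)) *
          ∏ i ∈ Pc', MvPolynomial.X i ^ k i}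

/-- The quantum Stanley–Reisner ideal `SR_ω(X)`. -/
def SRideal (n m : ℕ) (v : Fin m → Fin n → ℤ) (lam : Fin m → ℝ) :
    Ideal (MvPolynomial (Fin m) Lam) :=
  Ideal.span (SRgens n m v lam)

/-- The linear relation ideal `P(X)`, generated by `Σᵢ v_{i,j} zᵢ` for `j = 1, …, n`. -/
def linearRelIdeal (n m : ℕ) (v : Fin m → Fin n → ℤ) :
    Ideal (MvPolynomial (Fin m) Lam) :=
  Ideal.span {q | ∃ j : Fin n, q = ∑ i, MvPolynomial.C ((v i j : ℤ) : Lam) * MvPolynomial.X i}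

/-- `(𝔶, u) ∈ Crit(𝔓𝔒₀)`: each coordinate `𝔶ⱼ` is a (unit) element of `Λ₀ ∖ Λ₊` and all
partial derivatives `∂𝔓𝔒₀^u/∂y_k = Σᵢ v_{i,k} T^{ℓᵢ(u)} y^{vᵢ - e_k}` of the leading order
potential function `𝔓𝔒₀^u = Σᵢ T^{ℓᵢ(u)} y^{vᵢ}` vanish at `𝔶`. -/
def IsCriticalPoint (n m : ℕ) (v : Fin m → Fin n → ℤ) (lam : Fin m → ℝ)
    (y : Fin n → Lamˣ) (u : Fin n → ℝ) : Prop :=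
  (∀ j, MemLambda0 (y j : Lam) ∧ ¬ MemLambdaPlus (y j : Lam)) ∧
  ∀ k : Fin n, (∑ i : Fin m, ((v i k : ℤ) : Lam) *
    (TPow (ell n m v lam i u) *
      ((∏ j, y j ^ ((v i j) - if j = k then 1 else 0) : Lamˣ) : Lam))) = 0

/-- The Laurent polynomial ring `Λ^ℂ[y₁^{±1}, …, y_n^{±1}]`, i.e. the group algebra of
`ℤⁿ` over the Novikov field. -/
abbrev LaurentPoly (n : ℕ) : Type := AddMonoidAlgebra Lam (Fin n →₀ ℤ)

/-- The exponent vector `vᵢ ∈ ℤⁿ` of the monomial `y^{vᵢ}`. -/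
def expVec (n m : ℕ) (v : Fin m → Fin n → ℤ) (i : Fin m) : Fin n →₀ ℤ :=
  Finsupp.equivFunOnFinite.symm (v i)

/-- The monomial `z̄ᵢ(u) = T^{ℓᵢ(u)} y₁^{v_{i,1}} ⋯ y_n^{v_{i,n}}`. -/
def zbar (n m : ℕ) (v : Fin m → Fin n → ℤ) (lam : Fin m → ℝ) (i : Fin m) (u : Fin n → ℝ) :
    LaurentPoly n :=
  AddMonoidAlgebra.single (expVec n m v i) (TPow (ell n m v lam i u))

/-- The partial derivative `∂𝔓𝔒₀^u/∂y_k = Σᵢ v_{i,k} T^{ℓᵢ(u)} y^{vᵢ - e_k}` of the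
leading order potential function `𝔓𝔒₀^u = Σᵢ T^{ℓᵢ(u)} y^{vᵢ}`. -/
def POderiv (n m : ℕ) (v : Fin m → Fin n → ℤ) (lam : Fin m → ℝ) (u : Fin n → ℝ)
    (k : Fin n) : LaurentPoly n :=
  ∑ i : Fin m, AddMonoidAlgebra.single (expVec n m v i - Finsupp.single k 1)
    (((v i k : ℤ) : Lam) * TPow (ell n m v lam i u))

/-- The ideal of the Jacobian ring: the ideal generated by the partial derivatives of the
leading order potential function.  `Jac(𝔓𝔒₀^u)` is the quotient of the Laurent polynomial
ring by this ideal. -/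
def jacIdeal (n m : ℕ) (v : Fin m → Fin n → ℤ) (lam : Fin m → ℝ) (u : Fin n → ℝ) :
    Ideal (LaurentPoly n) :=
  Ideal.span (Set.range (POderiv n m v lam u))

/-! ### Auxiliary lemmas for the proof -/

namespace SRAux

lemma TPow_mul (a b : ℝ) : TPow a * TPow b = TPow (a + b) := by
  apply Subtype.ext
  show ((NovikovT ℂ a : Novikov ℂ) : HahnSeries ℝ ℂ) * ((NovikovT ℂ b : Novikov ℂ) : HahnSeries ℝ ℂ) = _
  simp [NovikovT, HahnSeries.single_mul_single]
  rfl

lemma TPow_zero : TPow 0 = 1 := by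
  apply Subtype.ext
  show (HahnSeries.single (0:ℝ) (1:ℂ)) = _
  exact HahnSeries.single_zero_one

lemma TPow_ne_zero (a : ℝ) : TPow a ≠ 0 := by
  intro h
  have : (HahnSeries.single a (1:ℂ)) = 0 := congrArg Subtype.val h
  simpa using congrArg (fun s => HahnSeries.coeff s a) this

lemma TPow_mul_TPow_neg (a : ℝ) : TPow a * TPow (-a) = 1 := by
  rw [TPow_mul, add_neg_cancel, TPow_zero]

lemma eq_zero_of_mul_TPow_eq_zero {c : Lam} {a : ℝ} (h : c * TPow a = 0) : c = 0 := by
  have := congrArg (· * TPow (-a)) h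
  simpa [mul_assoc, TPow_mul_TPow_neg] using this

/-- Convexity of the moment polytope. -/
lemma moment_convex (n m : ℕ) (v : Fin m → Fin n → ℤ) (lam : Fin m → ℝ) :
    Convex ℝ (moment n m v lam) := by
  intro x hx y hy a b ha hb hab
  intro i
  have h1 : ell n m v lam i (a • x + b • y) =
      a * ell n m v lam i x + b * ell n m v lam i y := by
    simp only [ell, Pi.add_apply, Pi.smul_apply, smul_eq_mul]
    rw [Finset.sum_congr rfl (fun j _ => by ring_nf :
      ∀ j ∈ Finset.univ, (a * x j + b * y j) * (v i j : ℝ) =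
        a * (x j * (v i j : ℝ)) + b * (y j * (v i j : ℝ)))]
    rw [Finset.sum_add_distrib, ← Finset.mul_sum, ← Finset.mul_sum]
    linear_combination (lam i) * hab
  rw [h1]
  have := hx i; have := hy i
  positivity

/-- The linear functional `u ↦ ⟨u, a⟩` attains its minimum over `P` at an extreme point. -/
lemma exists_extreme_min (n m : ℕ) (v : Fin m → Fin n → ℤ) (lam : Fin m → ℝ)
    (hc : IsCompact (moment n m v lam)) (hne : (moment n m v lam).Nonempty)
    (a : Fin n → ℝ) :
    ∃ u₀ ∈ Set.extremePoints ℝ (moment n m v lam),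
      ∀ w ∈ moment n m v lam, ∑ j, a j * u₀ j ≤ ∑ j, a j * w j := by
  classical
  set P := moment n m v lam with hP
  -- the continuous linear functional `u ↦ -⟨u, a⟩`
  let lin : (Fin n → ℝ) →ₗ[ℝ] ℝ :=
    - ∑ j : Fin n, (a j) • (LinearMap.proj j : (Fin n → ℝ) →ₗ[ℝ] ℝ)
  let l : (Fin n → ℝ) →L[ℝ] ℝ := ⟨lin, lin.continuous_of_finiteDimensional⟩
  have hl : ∀ z : Fin n → ℝ, l z = -∑ j, a j * z j := by
    intro z
    show lin z = _
    simp [lin, LinearMap.proj]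
  set F := l.toExposed P with hF
  have hexp : IsExposed ℝ P F := ContinuousLinearMap.toExposed.isExposed
  -- F is nonempty: the min of the continuous map is attained
  have hFne : F.Nonempty := by
    obtain ⟨x₀, hx₀, hmin⟩ := hc.exists_isMaxOn hne
      (Continuous.continuousOn l.continuous)
    exact ⟨x₀, hx₀, fun y hy => hmin hy⟩
  have hFcomp : IsCompact F := hexp.isCompact hc
  obtain ⟨u₀, hu₀⟩ := hFcomp.extremePoints_nonempty hFne
  have hext : IsExtreme ℝ P F := hexp.isExtreme
  refine ⟨u₀, hext.extremePoints_subset_extremePoints hu₀, ?_⟩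
  intro w hw
  have := (hu₀.1 : u₀ ∈ F).2 w hw
  rw [hl, hl] at this
  linarith

/-- Linearity of `ell` along a ray. -/
lemma ell_add_smul (n m : ℕ) (v : Fin m → Fin n → ℤ) (lam : Fin m → ℝ)
    (i : Fin m) (x d : Fin n → ℝ) (t : ℝ) :
    ell n m v lam i (fun b => x b + t * d b) =
      ell n m v lam i x + t * ∑ b, d b * (v i b : ℝ) := by
  have h : ∀ b, t * d b * (v i b : ℝ) = t * (d b * (v i b : ℝ)) := fun b => by ring
  simp only [ell, add_mul, Finset.sum_add_distrib, h, ← Finset.mul_sum]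
  ring

/-- Every integer vector is a nonnegative integral combination of the normals of the
facets through some vertex; in particular its support spans a cone. -/
lemma exists_cone_rep (n m : ℕ) (v : Fin m → Fin n → ℤ) (lam : Fin m → ℝ)
    (hD : IsDelzant n m v lam) (a : Fin n → ℤ) :
    ∃ k : Fin m →₀ ℕ, SpansCone n m v lam k.support ∧
      ∀ j, (∑ i, (k i : ℤ) * v i j) = a j := by
  classical
  obtain ⟨hc, hint, _, hvert⟩ := hD
  have hne : (moment n m v lam).Nonempty := hint.mono interior_subset
  obtain ⟨u₀, hu₀ext, hmin⟩ := exists_extreme_min n m v lam hc hne (fun j => (a j : ℝ))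
  have hu₀P : u₀ ∈ moment n m v lam := hu₀ext.1
  obtain ⟨σ, hσinj, hact, hdet⟩ := hvert u₀ hu₀ext
  set M : Matrix (Fin n) (Fin n) ℤ := Matrix.of fun p q => v (σ p) q with hM
  set c : Fin n → ℤ := Matrix.vecMul a M⁻¹ with hcdef
  have hcM : Matrix.vecMul c M = a := by
    rw [hcdef, Matrix.vecMul_vecMul, Matrix.nonsing_inv_mul M hdet, Matrix.vecMul_one]
  have hrep : ∀ q, a q = ∑ p, c p * v (σ p) q := by
    intro q
    rw [← hcM]
    rfl
  -- the real matrix and its inverse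
  set Mr : Matrix (Fin n) (Fin n) ℝ := M.map (fun z : ℤ => (z : ℝ)) with hMr
  have hdetr : IsUnit Mr.det := by
    have h1 : ((Int.castRingHom ℝ)) M.det = Mr.det := by
      rw [RingHom.map_det]
      rfl
    exact h1 ▸ hdet.map (Int.castRingHom ℝ)
  have hMrMul : Mr * Mr⁻¹ = 1 := Matrix.mul_nonsing_inv Mr hdetr
  -- the active constraints at `u₀`
  have hactive : ∀ i, i ∈ Set.range σ ↔ ell n m v lam i u₀ = 0 := by
    intro i
    constructor
    · intro hi
      have : i ∈ {i | ell n m v lam i u₀ = 0} := hact ▸ hi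
      exact this
    · intro hi
      have : i ∈ {i | ell n m v lam i u₀ = 0} := hi
      rw [hact] at this
      exact this
  -- nonnegativity of the coefficients
  have hcnn : ∀ p, 0 ≤ c p := by
    intro p
    by_contra hp
    push_neg at hp
    set d : Fin n → ℝ := fun b => Mr⁻¹ b p with hd
    have hdual : ∀ p', (∑ b, d b * (v (σ p') b : ℝ)) = if p' = p then 1 else 0 := by
      intro p'
      have h1 : (Mr * Mr⁻¹) p' p = if p' = p then 1 else 0 := by
        rw [hMrMul, Matrix.one_apply]
      rw [← h1, Matrix.mul_apply]
      apply Finset.sum_congr rfl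
      intro b _
      rw [mul_comm]
      rfl
    -- choose a small positive step
    set s : Finset (Fin m) := Finset.univ.filter (fun i => i ∉ Set.range σ) with hs
    set f : Fin m → ℝ :=
      fun i => ell n m v lam i u₀ / (1 + |∑ b, d b * (v i b : ℝ)|) with hf
    have hfpos : ∀ i ∈ s, 0 < f i := by
      intro i hi
      have hiact : i ∉ Set.range σ := by
        simpa [hs] using hi
      have h0 : 0 ≤ ell n m v lam i u₀ := hu₀P i
      have hne0 : ell n m v lam i u₀ ≠ 0 := fun h => hiact ((hactive i).2 h)
      have : 0 < ell n m v lam i u₀ := lt_of_le_of_ne h0 (Ne.symm hne0)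
      have hden : 0 < 1 + |∑ b, d b * (v i b : ℝ)| := by positivity
      positivity
    set t : ℝ := if hsn : s.Nonempty then min 1 (s.inf' hsn f) else 1 with ht
    have ht0 : 0 < t := by
      rw [ht]
      split
      · next hsn =>
        apply lt_min one_pos
        rw [Finset.lt_inf'_iff]
        exact hfpos
      · exact one_pos
    have htle : ∀ i ∈ s, t ≤ f i := by
      intro i hi
      rw [ht]
      rw [dif_pos ⟨i, hi⟩]
      exact le_trans (min_le_right _ _) (Finset.inf'_le f hi)
    -- the perturbed point is in the polytope
    set u₁ : Fin n → ℝ := fun b => u₀ b + t * d b with hu₁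
    have hu₁P : u₁ ∈ moment n m v lam := by
      intro i
      rw [hu₁]
      rw [ell_add_smul]
      by_cases hi : i ∈ Set.range σ
      · obtain ⟨p', rfl⟩ := hi
        rw [(hactive (σ p')).1 ⟨p', rfl⟩, hdual p']
        split <;> [linarith; simp]
      · have hi' : i ∈ s := by
          rw [hs, Finset.mem_filter]
          exact ⟨Finset.mem_univ i, hi⟩
        have h1 : t * (1 + |∑ b, d b * (v i b : ℝ)|) ≤ ell n m v lam i u₀ := by
          have := htle i hi'
          rw [hf] at this
          have hden : 0 < 1 + |∑ b, d b * (v i b : ℝ)| := by positivity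
          calc t * (1 + |∑ b, d b * (v i b : ℝ)|)
              ≤ (ell n m v lam i u₀ / (1 + |∑ b, d b * (v i b : ℝ)|)) *
                (1 + |∑ b, d b * (v i b : ℝ)|) := by
                apply mul_le_mul_of_nonneg_right this (le_of_lt hden)
            _ = ell n m v lam i u₀ := div_mul_cancel₀ _ (ne_of_gt hden)
        have h2 : t * |∑ b, d b * (v i b : ℝ)| < ell n m v lam i u₀ := by nlinarith
        have h3 : -(t * (∑ b, d b * (v i b : ℝ))) ≤ t * |∑ b, d b * (v i b : ℝ)| := by
          rw [← mul_neg]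
          exact mul_le_mul_of_nonneg_left (neg_le_abs _) ht0.le
        linarith
    -- but the functional strictly decreases along `d`, contradiction
    have hda : (∑ j, (a j : ℝ) * d j) = (c p : ℝ) := by
      have h1 : ∀ j, (a j : ℝ) = ∑ p', (c p' : ℝ) * (v (σ p') j : ℝ) := by
        intro j
        rw [hrep j]
        push_cast
        rfl
      calc (∑ j, (a j : ℝ) * d j)
          = ∑ j, ∑ p', ((c p' : ℝ) * (v (σ p') j : ℝ)) * d j := by
            apply Finset.sum_congr rfl
            intro j _
            rw [h1 j, Finset.sum_mul]
        _ = ∑ p', ∑ j, ((c p' : ℝ) * (v (σ p') j : ℝ)) * d j := Finset.sum_comm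
        _ = ∑ p', (c p' : ℝ) * ∑ j, d j * (v (σ p') j : ℝ) := by
            apply Finset.sum_congr rfl
            intro p' _
            rw [Finset.mul_sum]
            apply Finset.sum_congr rfl
            intro j _
            ring
        _ = (c p : ℝ) := by
            rw [Finset.sum_congr rfl (fun p' _ => by rw [hdual p'])]
            simp
    have hcontr := hmin u₁ hu₁P
    have hexp : (∑ j, (a j : ℝ) * u₁ j) =
        (∑ j, (a j : ℝ) * u₀ j) + t * (c p : ℝ) := by
      rw [hu₁, ← hda]
      simp only [mul_add, Finset.sum_add_distrib, Finset.mul_sum]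
      congr 1
      apply Finset.sum_congr rfl
      intro j _
      ring
    rw [hexp] at hcontr
    have : 0 < t * (-(c p : ℝ)) := by
      apply mul_pos ht0
      have : (0:ℤ) < -(c p) := neg_pos.2 hp
      exact_mod_cast this
    nlinarith
  -- assemble the Finsupp
  set k : Fin m →₀ ℕ := ∑ p : Fin n, Finsupp.single (σ p) (c p).toNat with hk
  have hkfun : ∀ i, k i = ∑ p, if σ p = i then (c p).toNat else 0 := by
    intro i
    rw [hk, Finsupp.finset_sum_apply]
    apply Finset.sum_congr rfl
    intro p _
    rw [Finsupp.single_apply]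
  have hkrange : ∀ i, i ∉ Set.range σ → k i = 0 := by
    intro i hi
    rw [hkfun]
    apply Finset.sum_eq_zero
    intro p _
    rw [if_neg (fun h => hi ⟨p, h⟩)]
  refine ⟨k, ⟨u₀, ?_⟩, ?_⟩
  · rw [Set.mem_iInter₂]
    intro i hi
    have hiσ : i ∈ Set.range σ := by
      by_contra hcon
      exact (Finsupp.mem_support_iff.1 hi) (hkrange i hcon)
    exact ⟨hu₀P, (hactive i).1 hiσ⟩
  · intro j
    have h1 : ∀ i, (k i : ℤ) * v i j = ∑ p, if σ p = i then (c p).toNat * v i j else 0 := by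
      intro i
      rw [hkfun i]
      push_cast
      rw [Finset.sum_mul]
      apply Finset.sum_congr rfl
      intro p _
      split <;> simp
    calc (∑ i, (k i : ℤ) * v i j)
        = ∑ i, ∑ p, if σ p = i then ((c p).toNat : ℤ) * v i j else 0 := by
          apply Finset.sum_congr rfl
          intro i _
          rw [h1 i]
      _ = ∑ p, ∑ i, if σ p = i then ((c p).toNat : ℤ) * v i j else 0 := Finset.sum_comm
      _ = ∑ p, ((c p).toNat : ℤ) * v (σ p) j := by
          apply Finset.sum_congr rfl
          intro p _
          rw [Finset.sum_ite_eq Finset.univ (σ p) (fun i => ((c p).toNat : ℤ) * v i j)]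
          simp
      _ = ∑ p, c p * v (σ p) j := by
          apply Finset.sum_congr rfl
          intro p _
          rw [Int.toNat_of_nonneg (hcnn p)]
      _ = a j := (hrep j).symm

/-- The weighted sum `Σᵢ kᵢ ℓᵢ(u)` expands as `⟨u, Σ kᵢvᵢ⟩ - Σ kᵢλᵢ`. -/
lemma weighted_ell_sum (n m : ℕ) (v : Fin m → Fin n → ℤ) (lam : Fin m → ℝ)
    (k : Fin m → ℕ) (u : Fin n → ℝ) :
    (∑ i, (k i : ℝ) * ell n m v lam i u) =
      (∑ j, u j * (∑ i, (k i : ℤ) * v i j : ℤ)) - ∑ i, (k i : ℝ) * lam i := by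
  simp only [ell, mul_sub, Finset.sum_sub_distrib]
  congr 1
  simp only [Finset.mul_sum]
  rw [Finset.sum_comm]
  apply Finset.sum_congr rfl
  intro j _
  push_cast
  rw [Finset.mul_sum]
  apply Finset.sum_congr rfl
  intro i _
  ring

/-- A common zero of the weighted constraints exists for a cone-supported weight. -/
lemma spansCone_witness (n m : ℕ) (v : Fin m → Fin n → ℤ) (lam : Fin m → ℝ)
    (hne : (moment n m v lam).Nonempty) (k : Fin m →₀ ℕ)
    (hk : SpansCone n m v lam k.support) :
    ∃ uS ∈ moment n m v lam, ∀ i ∈ k.support, ell n m v lam i uS = 0 := by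
  obtain ⟨uS, huS⟩ := hk
  rw [Set.mem_iInter₂] at huS
  rcases Finset.eq_empty_or_nonempty k.support with he | ⟨i₀, hi₀⟩
  · obtain ⟨w, hw⟩ := hne
    exact ⟨w, hw, by simp [he]⟩
  · exact ⟨uS, (huS i₀ hi₀).1, fun i hi => (huS i hi).2⟩

/-- Uniqueness of cone representations. -/
lemma cone_rep_unique (n m : ℕ) (v : Fin m → Fin n → ℤ) (lam : Fin m → ℝ)
    (hD : IsDelzant n m v lam) (k k' : Fin m →₀ ℕ)
    (hk : SpansCone n m v lam k.support) (hk' : SpansCone n m v lam k'.support)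
    (hsum : ∀ j, (∑ i, (k i : ℤ) * v i j) = ∑ i, (k' i : ℤ) * v i j) :
    k = k' := by
  classical
  obtain ⟨hc, hint, _, hvert⟩ := hD
  have hne : (moment n m v lam).Nonempty := hint.mono interior_subset
  obtain ⟨uS, huSP, huS⟩ := spansCone_witness n m v lam hne k hk
  obtain ⟨uS', huSP', huS'⟩ := spansCone_witness n m v lam hne k' hk'
  -- the two weighted sums of constraints agree
  set fk : (Fin n → ℝ) → ℝ := fun u => ∑ i, (k i : ℝ) * ell n m v lam i u with hfk
  set fk' : (Fin n → ℝ) → ℝ := fun u => ∑ i, (k' i : ℝ) * ell n m v lam i u with hfk'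
  have hnonneg : ∀ (g : Fin m → ℕ) (u : Fin n → ℝ), u ∈ moment n m v lam →
      0 ≤ ∑ i, (g i : ℝ) * ell n m v lam i u := by
    intro g u hu
    apply Finset.sum_nonneg
    intro i _
    exact mul_nonneg (by positivity) (hu i)
  have hzero : ∀ (g : Fin m →₀ ℕ) (u : Fin n → ℝ),
      (∀ i ∈ g.support, ell n m v lam i u = 0) →
      (∑ i, (g i : ℝ) * ell n m v lam i u) = 0 := by
    intro g u hg
    apply Finset.sum_eq_zero
    intro i _
    by_cases hi : i ∈ g.support
    · rw [hg i hi, mul_zero]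
    · rw [Finsupp.notMem_support_iff.1 hi]
      simp
  have hdiff : ∀ u, fk u - fk' u = (∑ i, (k' i : ℝ) * lam i) - ∑ i, (k i : ℝ) * lam i := by
    intro u
    rw [hfk, hfk']
    simp only
    rw [weighted_ell_sum, weighted_ell_sum]
    have : ∀ j, ((∑ i, (k i : ℤ) * v i j : ℤ) : ℝ) = ((∑ i, (k' i : ℤ) * v i j : ℤ) : ℝ) := by
      intro j; exact_mod_cast congrArg (fun z : ℤ => (z : ℝ)) (hsum j)
    rw [Finset.sum_congr rfl (fun j _ => by rw [this j])]
    ring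
  have hδ0 : (∑ i, (k' i : ℝ) * lam i) - (∑ i, (k i : ℝ) * lam i) = 0 := by
    have h1 : fk uS = 0 := hzero k uS huS
    have h2 : fk' uS' = 0 := hzero k' uS' huS'
    have h3 := hnonneg k' uS huSP
    have h4 := hnonneg k uS' huSP'
    have h5 := hdiff uS
    have h6 := hdiff uS'
    change 0 ≤ fk' uS at h3
    change 0 ≤ fk uS' at h4
    linarith
  have hfk'uS : fk' uS = 0 := by
    have := hdiff uS
    have h1 : fk uS = 0 := hzero k uS huS
    linarith
  -- hence all constraints in the union of supports vanish at `uS`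
  set T : Finset (Fin m) := k.support ∪ k'.support with hT
  have hTze : ∀ i ∈ T, ell n m v lam i uS = 0 := by
    intro i hi
    rcases Finset.mem_union.1 hi with h | h
    · exact huS i h
    · -- from `fk' uS = 0`, a sum of nonnegatives
      have hterms := (Finset.sum_eq_zero_iff_of_nonneg
        (fun i _ => mul_nonneg (by positivity) (huSP i) :
          ∀ i ∈ (Finset.univ : Finset (Fin m)), 0 ≤ (k' i : ℝ) * ell n m v lam i uS)).1
        hfk'uS i (Finset.mem_univ i)
      have hki : (0:ℝ) < (k' i : ℝ) := by
        have := Finsupp.mem_support_iff.1 h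
        exact_mod_cast Nat.pos_of_ne_zero this
      exact (mul_eq_zero.1 hterms).resolve_left (ne_of_gt hki)
  -- find a vertex where all constraints in `T` vanish
  set a : Fin n → ℤ := fun j => ∑ i ∈ T, v i j with ha
  obtain ⟨u₀, hu₀ext, hmin⟩ := exists_extreme_min n m v lam hc hne (fun j => (a j : ℝ))
  have hu₀P : u₀ ∈ moment n m v lam := hu₀ext.1
  have hpair : ∀ w : Fin n → ℝ, (∑ j, (a j : ℝ) * w j) =
      (∑ i ∈ T, ell n m v lam i w) + ∑ i ∈ T, lam i := by
    intro w
    rw [ha]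
    simp only [ell, Finset.sum_sub_distrib]
    push_cast
    rw [Finset.sum_comm]
    have : ∀ j, (∑ i ∈ T, (v i j : ℝ)) * w j = ∑ i ∈ T, w j * (v i j : ℝ) := by
      intro j
      rw [Finset.sum_mul]
      apply Finset.sum_congr rfl
      intro i _
      ring
    rw [Finset.sum_congr rfl (fun j _ => this j)]
    rw [Finset.sum_comm]
    ring
  have hTu₀ : ∀ i ∈ T, ell n m v lam i u₀ = 0 := by
    have h1 := hmin uS huSP
    rw [hpair uS, hpair u₀] at h1
    have h2 : (∑ i ∈ T, ell n m v lam i uS) = 0 :=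
      Finset.sum_eq_zero (fun i hi => hTze i hi)
    have h3 : 0 ≤ ∑ i ∈ T, ell n m v lam i u₀ :=
      Finset.sum_nonneg (fun i _ => hu₀P i)
    have h4 : (∑ i ∈ T, ell n m v lam i u₀) = 0 := le_antisymm (by linarith) h3
    intro i hi
    exact (Finset.sum_eq_zero_iff_of_nonneg (fun i _ => hu₀P i)).1 h4 i hi
  obtain ⟨σ, hσinj, hact, hdet⟩ := hvert u₀ hu₀ext
  have hTσ : ∀ i ∈ T, i ∈ Set.range σ := by
    intro i hi
    have : i ∈ {i | ell n m v lam i u₀ = 0} := hTu₀ i hi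
    rwa [hact] at this
  have hout : ∀ i, i ∉ Set.range σ → k i = 0 ∧ k' i = 0 := by
    intro i hi
    constructor
    · by_contra hcon
      exact hi (hTσ i (Finset.mem_union_left _ (Finsupp.mem_support_iff.2 hcon)))
    · by_contra hcon
      exact hi (hTσ i (Finset.mem_union_right _ (Finsupp.mem_support_iff.2 hcon)))
  set M : Matrix (Fin n) (Fin n) ℤ := Matrix.of fun p q => v (σ p) q with hM
  set g : Fin n → ℤ := fun p => (k (σ p) : ℤ) - (k' (σ p) : ℤ) with hg
  have hgM : Matrix.vecMul g M = 0 := by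
    funext q
    show (∑ p, g p * v (σ p) q) = 0
    have h1 : (∑ p, g p * v (σ p) q) = ∑ i ∈ Finset.univ.image σ,
        ((k i : ℤ) - (k' i : ℤ)) * v i q := by
      rw [Finset.sum_image (fun x _ y _ h => hσinj h)]
    have h2 : (∑ i ∈ Finset.univ.image σ, ((k i : ℤ) - (k' i : ℤ)) * v i q) =
        ∑ i, ((k i : ℤ) - (k' i : ℤ)) * v i q := by
      apply Finset.sum_subset (Finset.subset_univ _)
      intro i _ hi
      have hi' : i ∉ Set.range σ := by
        intro ⟨p, hp⟩
        exact hi (Finset.mem_image.2 ⟨p, Finset.mem_univ p, hp⟩)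
      obtain ⟨e1, e2⟩ := hout i hi'
      rw [e1, e2]
      ring
    rw [h1, h2]
    have := hsum q
    rw [Finset.sum_congr rfl (fun i _ => by ring :
      ∀ i ∈ Finset.univ, ((k i : ℤ) - (k' i : ℤ)) * v i q =
        (k i : ℤ) * v i q - (k' i : ℤ) * v i q)]
    rw [Finset.sum_sub_distrib, this]
    ring
  have hgz : g = 0 := by
    have h1 := congrArg (fun w => Matrix.vecMul w M⁻¹) hgM
    simp only [Matrix.vecMul_vecMul, Matrix.mul_nonsing_inv M hdet, Matrix.vecMul_one,
      Matrix.zero_vecMul] at h1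
    exact h1
  apply Finsupp.ext
  intro i
  by_cases hi : i ∈ Set.range σ
  · obtain ⟨p, rfl⟩ := hi
    have := congrFun hgz p
    rw [hg] at this
    simp only [Pi.zero_apply, sub_eq_zero] at this
    exact_mod_cast this
  · obtain ⟨e1, e2⟩ := hout i hi
    rw [e1, e2]

/-! #### The algebra homomorphism `zᵢ ↦ z̄ᵢ(u)` -/

/-- Energy of a monomial exponent. -/
def eMap (n m : ℕ) (v : Fin m → Fin n → ℤ) (lam : Fin m → ℝ) (u : Fin n → ℝ)
    (d : Fin m →₀ ℕ) : ℝ :=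
  ∑ i, (d i : ℝ) * ell n m v lam i u

/-- Image exponent vector of a monomial exponent. -/
def aMap (n m : ℕ) (v : Fin m → Fin n → ℤ) (d : Fin m →₀ ℕ) : Fin n →₀ ℤ :=
  Finsupp.equivFunOnFinite.symm (fun j => ∑ i, (d i : ℤ) * v i j)

lemma aMap_apply (n m : ℕ) (v : Fin m → Fin n → ℤ) (d : Fin m →₀ ℕ) (j : Fin n) :
    aMap n m v d j = ∑ i, (d i : ℤ) * v i j := rfl

lemma eMap_eq (n m : ℕ) (v : Fin m → Fin n → ℤ) (lam : Fin m → ℝ) (u : Fin n → ℝ)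
    (d : Fin m →₀ ℕ) :
    eMap n m v lam u d =
      (∑ j, u j * (aMap n m v d j : ℝ)) - ∑ i, (d i : ℝ) * lam i := by
  rw [eMap, weighted_ell_sum]
  rfl

lemma TPow_pow (x : ℝ) (p : ℕ) : TPow x ^ p = TPow (p * x) := by
  induction p with
  | zero => simp [TPow_zero]
  | succ q ih =>
    rw [pow_succ, ih, TPow_mul]
    congr 1
    push_cast
    ring

lemma TPow_sum {ι : Type*} (s : Finset ι) (h : ι → ℝ) :
    (∏ i ∈ s, TPow (h i)) = TPow (∑ i ∈ s, h i) := by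
  classical
  induction s using Finset.induction with
  | empty => simp [TPow_zero]
  | insert _ _ hx ih =>
    rw [Finset.prod_insert hx, Finset.sum_insert hx, ih, TPow_mul]

lemma prod_single {ι : Type*} (n : ℕ) (s : Finset ι) (f : ι → (Fin n →₀ ℤ)) (g : ι → Lam) :
    (∏ i ∈ s, (AddMonoidAlgebra.single (f i) (g i) : LaurentPoly n)) =
      AddMonoidAlgebra.single (∑ i ∈ s, f i) (∏ i ∈ s, g i) := by
  classical
  induction s using Finset.induction with
  | empty => simp [AddMonoidAlgebra.one_def]
  | insert _ _ hx ih =>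
    rw [Finset.prod_insert hx, Finset.sum_insert hx, Finset.prod_insert hx, ih,
      AddMonoidAlgebra.single_mul_single]

/-- The algebra homomorphism `Λ[z] → Λ[y^{±}]`, `zᵢ ↦ z̄ᵢ(u)`. -/
def psiHom (n m : ℕ) (v : Fin m → Fin n → ℤ) (lam : Fin m → ℝ) (u : Fin n → ℝ) :
    MvPolynomial (Fin m) Lam →ₐ[Lam] LaurentPoly n :=
  MvPolynomial.aeval (fun i => zbar n m v lam i u)

lemma psi_X (n m : ℕ) (v : Fin m → Fin n → ℤ) (lam : Fin m → ℝ) (u : Fin n → ℝ)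
    (i : Fin m) : psiHom n m v lam u (MvPolynomial.X i) = zbar n m v lam i u :=
  MvPolynomial.aeval_X _ i

lemma psi_C (n m : ℕ) (v : Fin m → Fin n → ℤ) (lam : Fin m → ℝ) (u : Fin n → ℝ)
    (r : Lam) : psiHom n m v lam u (MvPolynomial.C r) = algebraMap Lam (LaurentPoly n) r :=
  MvPolynomial.aeval_C _ r

lemma psi_monomial (n m : ℕ) (v : Fin m → Fin n → ℤ) (lam : Fin m → ℝ) (u : Fin n → ℝ)
    (d : Fin m →₀ ℕ) (r : Lam) :
    psiHom n m v lam u (MvPolynomial.monomial d r) =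
      AddMonoidAlgebra.single (aMap n m v d) (r * TPow (eMap n m v lam u d)) := by
  classical
  rw [psiHom, MvPolynomial.aeval_monomial]
  have h1 : (d.prod fun i p => zbar n m v lam i u ^ p) =
      AddMonoidAlgebra.single (∑ i ∈ d.support, d i • expVec n m v i)
        (TPow (∑ i ∈ d.support, (d i : ℝ) * ell n m v lam i u)) := by
    rw [Finsupp.prod]
    rw [Finset.prod_congr rfl (fun i _ => by
      rw [zbar, AddMonoidAlgebra.single_pow, TPow_pow] :
        ∀ i ∈ d.support, zbar n m v lam i u ^ d i =
          AddMonoidAlgebra.single (d i • expVec n m v i)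
            (TPow ((d i : ℝ) * ell n m v lam i u)))]
    rw [prod_single, TPow_sum]
  rw [h1]
  have h2 : (algebraMap Lam (LaurentPoly n)) r = AddMonoidAlgebra.single 0 r := by
    rw [AddMonoidAlgebra.coe_algebraMap]
    simp
  rw [h2, AddMonoidAlgebra.single_mul_single, zero_add]
  have h3 : (∑ i ∈ d.support, d i • expVec n m v i) = aMap n m v d := by
    ext j
    rw [Finsupp.finset_sum_apply]
    rw [aMap_apply]
    rw [← Finset.sum_subset (Finset.subset_univ d.support)
      (fun i _ hi => by
        rw [Finsupp.notMem_support_iff.1 hi]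
        simp)]
    apply Finset.sum_congr rfl
    intro i _
    rw [Finsupp.smul_apply]
    simp [expVec, mul_comm]
  have h4 : (∑ i ∈ d.support, (d i : ℝ) * ell n m v lam i u) = eMap n m v lam u d := by
    rw [eMap]
    apply Finset.sum_subset (Finset.subset_univ d.support)
    intro i _ hi
    rw [Finsupp.notMem_support_iff.1 hi]
    simp
  rw [h3, h4]

/-- Sums of `single`s over a finset, applied. -/
lemma sumD_apply (m : ℕ) (s : Finset (Fin m)) (k : Fin m → ℕ) (i : Fin m) :
    (∑ i' ∈ s, Finsupp.single i' (k i') : Fin m →₀ ℕ) i = if i ∈ s then k i else 0 := by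
  classical
  rw [Finsupp.finset_sum_apply]
  rw [Finset.sum_congr rfl (fun i' _ => Finsupp.single_apply)]
  exact Finset.sum_ite_eq' s i k

lemma sumD_weight (m : ℕ) {R : Type*} [CommRing R] (s : Finset (Fin m)) (k : Fin m → ℕ)
    (w : Fin m → R) :
    (∑ i, ((∑ i' ∈ s, Finsupp.single i' (k i') : Fin m →₀ ℕ) i : R) * w i) =
      ∑ i ∈ s, (k i : R) * w i := by
  classical
  rw [← Finset.sum_subset (Finset.subset_univ s) (fun i _ hi => by
    rw [sumD_apply, if_neg hi]
    simp)]
  apply Finset.sum_congr rfl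
  intro i hi
  rw [sumD_apply, if_pos hi]

lemma prod_X_pow_finset (m : ℕ) (s : Finset (Fin m)) (k : Fin m → ℕ) :
    (∏ i ∈ s, (MvPolynomial.X i : MvPolynomial (Fin m) Lam) ^ k i) =
      MvPolynomial.monomial (∑ i ∈ s, Finsupp.single i (k i)) 1 := by
  classical
  induction s using Finset.induction with
  | empty => simp
  | insert _ _ hx ih =>
    rw [Finset.prod_insert hx, Finset.sum_insert hx, ih, MvPolynomial.X_pow_eq_monomial,
      MvPolynomial.monomial_mul, one_mul]

/-- The quantum Stanley–Reisner relations are sent to zero. -/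
lemma psi_SR_zero (n m : ℕ) (v : Fin m → Fin n → ℤ) (lam : Fin m → ℝ) (u : Fin n → ℝ) :
    ∀ q ∈ SRideal n m v lam, psiHom n m v lam u q = 0 := by
  classical
  intro q hq
  refine Submodule.span_induction ?_ ?_ ?_ ?_ hq
  · rintro x ⟨Pc, Pc', k, hPc, hPc', hkpos, hrel, rfl⟩
    set D1 : Fin m →₀ ℕ := ∑ i ∈ Pc, Finsupp.single i 1 with hD1
    set D2 : Fin m →₀ ℕ := ∑ i ∈ Pc', Finsupp.single i (k i) with hD2
    have e1 : (∏ i ∈ Pc, (MvPolynomial.X i : MvPolynomial (Fin m) Lam)) =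
        MvPolynomial.monomial D1 1 := by
      rw [hD1, ← prod_X_pow_finset m Pc (fun _ => 1)]
      simp
    have e2 : (∏ i ∈ Pc', (MvPolynomial.X i : MvPolynomial (Fin m) Lam) ^ k i) =
        MvPolynomial.monomial D2 1 := prod_X_pow_finset m Pc' k
    rw [map_sub, map_mul, e1, e2, psi_monomial, psi_monomial, psi_C]
    have h2 : (algebraMap Lam (LaurentPoly n))
        (TPow ((∑ i ∈ Pc', (k i : ℝ) * lam i) - ∑ i ∈ Pc, lam i)) =
        AddMonoidAlgebra.single 0
          (TPow ((∑ i ∈ Pc', (k i : ℝ) * lam i) - ∑ i ∈ Pc, lam i)) := by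
      rw [AddMonoidAlgebra.coe_algebraMap]
      simp
    rw [h2, AddMonoidAlgebra.single_mul_single, zero_add, one_mul, one_mul]
    have haeq : aMap n m v D1 = aMap n m v D2 := by
      ext j
      rw [aMap_apply, aMap_apply, hD1, hD2]
      rw [sumD_weight m Pc (fun _ => 1) (fun i => v i j),
        sumD_weight m Pc' k (fun i => v i j)]
      simpa using hrel j
    have heeq : eMap n m v lam u D1 =
        ((∑ i ∈ Pc', (k i : ℝ) * lam i) - ∑ i ∈ Pc, lam i) + eMap n m v lam u D2 := by
      rw [eMap_eq, eMap_eq, haeq]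
      rw [hD1, hD2, sumD_weight m Pc (fun _ => 1) lam, sumD_weight m Pc' k lam]
      push_cast
      ring
    rw [haeq, heeq, ← TPow_mul]
    exact sub_self _
  · exact map_zero _
  · intro x y _ _ hx hy
    rw [map_add, hx, hy, add_zero]
  · intro a x _ hx
    rw [smul_eq_mul, map_mul, hx, mul_zero]

/-! #### Normal form modulo the Stanley–Reisner ideal -/

lemma sum_univ_eq_support (m : ℕ) {R : Type*} [CommRing R] (k : Fin m →₀ ℕ)
    (w : Fin m → R) :
    (∑ i, (k i : R) * w i) = ∑ i ∈ k.support, (k i : R) * w i := by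
  classical
  symm
  apply Finset.sum_subset (Finset.subset_univ _)
  intro i _ hi
  rw [Finsupp.notMem_support_iff.1 hi]
  simp

/-- If the support does not span a cone, it contains a primitive collection. -/
lemma exists_primitive_subset (n m : ℕ) (v : Fin m → Fin n → ℤ) (lam : Fin m → ℝ)
    (S : Finset (Fin m)) (h : ¬ SpansCone n m v lam S) :
    ∃ Pc ⊆ S, IsPrimitiveCollection n m v lam Pc := by
  classical
  set 𝒮 : Finset (Finset (Fin m)) :=
    S.powerset.filter (fun t => ¬ SpansCone n m v lam t) with h𝒮
  have hSne : 𝒮.Nonempty := ⟨S, by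
    rw [h𝒮, Finset.mem_filter]
    exact ⟨Finset.mem_powerset_self S, h⟩⟩
  obtain ⟨Pc, hPc𝒮, hmin⟩ := Finset.exists_min_image 𝒮 Finset.card hSne
  rw [h𝒮, Finset.mem_filter, Finset.mem_powerset] at hPc𝒮
  refine ⟨Pc, hPc𝒮.1, hPc𝒮.2, ?_⟩
  intro Sc hSc
  by_contra hcon
  have hSc𝒮 : Sc ∈ 𝒮 := by
    rw [h𝒮, Finset.mem_filter, Finset.mem_powerset]
    exact ⟨hSc.subset.trans hPc𝒮.1, hcon⟩
  have := hmin Sc hSc𝒮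
  have := Finset.card_lt_card hSc
  omega

/-- Linearity of `aMap` under the rewriting step. -/
lemma aMap_step (n m : ℕ) (v : Fin m → Fin n → ℤ) (d D k : Fin m →₀ ℕ) (hle : D ≤ d) :
    aMap n m v (d - D + k) = aMap n m v d - aMap n m v D + aMap n m v k := by
  ext j
  simp only [Finsupp.add_apply, Finsupp.sub_apply, aMap_apply]
  rw [← Finset.sum_sub_distrib, ← Finset.sum_add_distrib]
  apply Finset.sum_congr rfl
  intro i _
  have h1 : (d - D) i = d i - D i := Finsupp.tsub_apply d D i
  rw [h1]
  have h2 : D i ≤ d i := hle i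
  push_cast [h2]
  ring

lemma eMap_step (n m : ℕ) (v : Fin m → Fin n → ℤ) (lam : Fin m → ℝ) (u : Fin n → ℝ)
    (d D k : Fin m →₀ ℕ) (hle : D ≤ d) :
    eMap n m v lam u (d - D + k) =
      eMap n m v lam u d - eMap n m v lam u D + eMap n m v lam u k := by
  simp only [eMap]
  rw [← Finset.sum_sub_distrib, ← Finset.sum_add_distrib]
  apply Finset.sum_congr rfl
  intro i _
  have h1 : (d - D + k) i = d i - D i + k i := by
    rw [Finsupp.add_apply, Finsupp.tsub_apply]
  rw [h1]
  have h2 : D i ≤ d i := hle i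
  push_cast [h2]
  ring

lemma eMap_nonneg (n m : ℕ) (v : Fin m → Fin n → ℤ) (lam : Fin m → ℝ) (u : Fin n → ℝ)
    (hu : u ∈ moment n m v lam) (d : Fin m →₀ ℕ) : 0 ≤ eMap n m v lam u d :=
  Finset.sum_nonneg (fun i _ => mul_nonneg (by positivity) (hu i))

/-- A choice of cone representation for the sum of normals over a subset. -/
noncomputable def kOf (n m : ℕ) (v : Fin m → Fin n → ℤ) (lam : Fin m → ℝ)
    (hD : IsDelzant n m v lam) (Pc : Finset (Fin m)) : Fin m →₀ ℕ :=
  Classical.choose (exists_cone_rep n m v lam hD (fun j => ∑ i ∈ Pc, v i j))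

lemma kOf_spec (n m : ℕ) (v : Fin m → Fin n → ℤ) (lam : Fin m → ℝ)
    (hD : IsDelzant n m v lam) (Pc : Finset (Fin m)) :
    SpansCone n m v lam (kOf n m v lam hD Pc).support ∧
      ∀ j, (∑ i, ((kOf n m v lam hD Pc) i : ℤ) * v i j) = ∑ i ∈ Pc, v i j :=
  Classical.choose_spec (exists_cone_rep n m v lam hD (fun j => ∑ i ∈ Pc, v i j))

/-- The energy drop of the rewriting step associated to a subset. -/
noncomputable def wfun (n m : ℕ) (v : Fin m → Fin n → ℤ) (lam : Fin m → ℝ)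
    (hD : IsDelzant n m v lam) (Pc : Finset (Fin m)) : ℝ :=
  (∑ i ∈ (kOf n m v lam hD Pc).support, ((kOf n m v lam hD Pc) i : ℝ) * lam i) -
    ∑ i ∈ Pc, lam i

/-- The indicator exponent of a subset. -/
noncomputable def indOf (m : ℕ) (Pc : Finset (Fin m)) : Fin m →₀ ℕ :=
  ∑ i ∈ Pc, Finsupp.single i 1

lemma aMap_indOf (n m : ℕ) (v : Fin m → Fin n → ℤ) (Pc : Finset (Fin m)) (j : Fin n) :
    aMap n m v (indOf m Pc) j = ∑ i ∈ Pc, v i j := by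
  rw [aMap_apply, indOf, sumD_weight m Pc (fun _ => 1) (fun i => v i j)]
  simp

lemma aMap_kOf_eq (n m : ℕ) (v : Fin m → Fin n → ℤ) (lam : Fin m → ℝ)
    (hD : IsDelzant n m v lam) (Pc : Finset (Fin m)) :
    aMap n m v (kOf n m v lam hD Pc) = aMap n m v (indOf m Pc) := by
  ext j
  rw [aMap_apply, aMap_indOf, (kOf_spec n m v lam hD Pc).2 j]

lemma eMap_indOf (n m : ℕ) (v : Fin m → Fin n → ℤ) (lam : Fin m → ℝ) (u : Fin n → ℝ)
    (Pc : Finset (Fin m)) :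
    eMap n m v lam u (indOf m Pc) = ∑ i ∈ Pc, ell n m v lam i u := by
  rw [eMap, indOf, sumD_weight m Pc (fun _ => 1) (fun i => ell n m v lam i u)]
  simp

/-- The energy identity of the rewriting step (valid for every `u`). -/
lemma eMap_drop (n m : ℕ) (v : Fin m → Fin n → ℤ) (lam : Fin m → ℝ)
    (hD : IsDelzant n m v lam) (u : Fin n → ℝ) (Pc : Finset (Fin m)) :
    eMap n m v lam u (indOf m Pc) - eMap n m v lam u (kOf n m v lam hD Pc) =
      wfun n m v lam hD Pc := by
  rw [eMap_eq, eMap_eq, aMap_kOf_eq n m v lam hD Pc, wfun]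
  rw [← sum_univ_eq_support m (kOf n m v lam hD Pc) lam]
  rw [indOf, sumD_weight m Pc (fun _ => 1) lam]
  push_cast
  ring

/-- The rewriting-step energies are positive on primitive collections. -/
lemma wfun_pos (n m : ℕ) (v : Fin m → Fin n → ℤ) (lam : Fin m → ℝ)
    (hD : IsDelzant n m v lam) (Pc : Finset (Fin m))
    (hPc : IsPrimitiveCollection n m v lam Pc) : 0 < wfun n m v lam hD Pc := by
  classical
  have hne : (moment n m v lam).Nonempty := hD.2.1.mono interior_subset
  obtain ⟨hspan, hrel⟩ := kOf_spec n m v lam hD Pc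
  obtain ⟨uS, huSP, huS⟩ := spansCone_witness n m v lam hne (kOf n m v lam hD Pc) hspan
  by_contra hcon
  push_neg at hcon
  have hk0 : eMap n m v lam uS (kOf n m v lam hD Pc) = 0 := by
    rw [eMap]
    apply Finset.sum_eq_zero
    intro i _
    by_cases hi : i ∈ (kOf n m v lam hD Pc).support
    · rw [huS i hi, mul_zero]
    · rw [Finsupp.notMem_support_iff.1 hi]
      simp
  have hdrop := eMap_drop n m v lam hD uS Pc
  rw [hk0, sub_zero] at hdrop
  rw [eMap_indOf] at hdrop
  have hsum0 : (∑ i ∈ Pc, ell n m v lam i uS) = 0 := by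
    have hnn : 0 ≤ ∑ i ∈ Pc, ell n m v lam i uS :=
      Finset.sum_nonneg (fun i _ => huSP i)
    linarith
  have hall : ∀ i ∈ Pc, ell n m v lam i uS = 0 :=
    (Finset.sum_eq_zero_iff_of_nonneg (fun i _ => huSP i)).1 hsum0
  exact hPc.1 ⟨uS, Set.mem_iInter₂.2 (fun i hi => ⟨huSP, hall i hi⟩)⟩

/-- One rewriting step in the quotient ring. -/
lemma rewrite_step (n m : ℕ) (v : Fin m → Fin n → ℤ) (lam : Fin m → ℝ)
    (hD : IsDelzant n m v lam) (d : Fin m →₀ ℕ) (Pc : Finset (Fin m))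
    (hPc : IsPrimitiveCollection n m v lam Pc) (hsub : Pc ⊆ d.support) :
    Ideal.Quotient.mk (SRideal n m v lam) (MvPolynomial.monomial d 1) =
      Ideal.Quotient.mk (SRideal n m v lam)
        (MvPolynomial.C (TPow (wfun n m v lam hD Pc)) *
          MvPolynomial.monomial (d - indOf m Pc + kOf n m v lam hD Pc) 1) := by
  classical
  set k : Fin m →₀ ℕ := kOf n m v lam hD Pc with hk
  set D1 : Fin m →₀ ℕ := indOf m Pc with hD1
  have hle : D1 ≤ d := by
    intro i
    rw [hD1, indOf, sumD_apply]
    split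
    · next hi => exact Nat.one_le_iff_ne_zero.2 (Finsupp.mem_support_iff.1 (hsub hi))
    · exact Nat.zero_le _
  set gen : MvPolynomial (Fin m) Lam :=
    (∏ i ∈ Pc, MvPolynomial.X i) -
      MvPolynomial.C (TPow ((∑ i ∈ k.support, (k i : ℝ) * lam i) - ∑ i ∈ Pc, lam i)) *
        ∏ i ∈ k.support, MvPolynomial.X i ^ k i with hgen
  have hgen_mem : gen ∈ SRgens n m v lam := by
    refine ⟨Pc, k.support, fun i => k i, hPc, (kOf_spec n m v lam hD Pc).1, ?_, ?_, rfl⟩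
    · intro i hi
      exact Nat.pos_of_ne_zero (Finsupp.mem_support_iff.1 hi)
    · intro j
      rw [← (kOf_spec n m v lam hD Pc).2 j, sum_univ_eq_support m k (fun i => v i j)]
  have e1 : (∏ i ∈ Pc, (MvPolynomial.X i : MvPolynomial (Fin m) Lam)) =
      MvPolynomial.monomial D1 1 := by
    rw [hD1, indOf, ← prod_X_pow_finset m Pc (fun _ => 1)]
    simp
  have e2 : (∏ i ∈ k.support, (MvPolynomial.X i : MvPolynomial (Fin m) Lam) ^ k i) =
      MvPolynomial.monomial k 1 := by
    rw [prod_X_pow_finset m k.support (fun i => k i)]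
    congr 1
    conv_rhs => rw [← Finsupp.sum_single k]
    rfl
  have hwval : wfun n m v lam hD Pc =
      (∑ i ∈ k.support, (k i : ℝ) * lam i) - ∑ i ∈ Pc, lam i := rfl
  rw [Ideal.Quotient.eq]
  have hiden : MvPolynomial.monomial d (1:Lam) -
      MvPolynomial.C (TPow (wfun n m v lam hD Pc)) * MvPolynomial.monomial (d - D1 + k) 1 =
      MvPolynomial.monomial (d - D1) 1 * gen := by
    rw [hgen, mul_sub, e1, e2, MvPolynomial.monomial_mul, one_mul,
      tsub_add_cancel_of_le hle, hwval, mul_left_comm, MvPolynomial.monomial_mul, one_mul]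
  rw [hiden]
  exact Ideal.mul_mem_left _ _ (Ideal.subset_span hgen_mem)

/-- Normal form: every monomial is congruent, modulo `SR_ω(X)`, to `T^c` times a monomial
whose support spans a cone of the normal fan, with the same image exponent vector. -/
lemma exists_normal_form (n m : ℕ) (v : Fin m → Fin n → ℤ) (lam : Fin m → ℝ)
    (hD : IsDelzant n m v lam) (u : Fin n → ℝ) (hu : u ∈ moment n m v lam)
    (d : Fin m →₀ ℕ) :
    ∃ g : Fin m →₀ ℕ, SpansCone n m v lam g.support ∧ aMap n m v g = aMap n m v d ∧
      ∃ c : ℝ, Ideal.Quotient.mk (SRideal n m v lam) (MvPolynomial.monomial d 1) =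
        Ideal.Quotient.mk (SRideal n m v lam)
          (MvPolynomial.C (TPow c) * MvPolynomial.monomial g 1) := by
  classical
  set PCs : Finset (Finset (Fin m)) :=
    Finset.univ.filter (fun Pc => IsPrimitiveCollection n m v lam Pc) with hPCs
  set δ : ℝ := if h : PCs.Nonempty then
      min 1 (PCs.inf' h (wfun n m v lam hD)) else 1 with hδ
  have hδ0 : 0 < δ := by
    rw [hδ]
    split
    · next h =>
      apply lt_min one_pos
      rw [Finset.lt_inf'_iff]
      intro Pc hPc
      refine wfun_pos n m v lam hD Pc ?_
      rw [hPCs] at hPc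
      exact (Finset.mem_filter.1 hPc).2
    · exact one_pos
  have hδle : ∀ Pc, IsPrimitiveCollection n m v lam Pc → δ ≤ wfun n m v lam hD Pc := by
    intro Pc h
    have hPcmem : Pc ∈ PCs := by
      rw [hPCs, Finset.mem_filter]
      exact ⟨Finset.mem_univ _, h⟩
    rw [hδ, dif_pos ⟨Pc, hPcmem⟩]
    exact le_trans (min_le_right _ _) (Finset.inf'_le _ hPcmem)
  suffices H : ∀ N : ℕ, ∀ d : Fin m →₀ ℕ, eMap n m v lam u d ≤ N * δ →
      ∃ g : Fin m →₀ ℕ, SpansCone n m v lam g.support ∧ aMap n m v g = aMap n m v d ∧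
      ∃ c : ℝ, Ideal.Quotient.mk (SRideal n m v lam) (MvPolynomial.monomial d 1) =
        Ideal.Quotient.mk (SRideal n m v lam)
          (MvPolynomial.C (TPow c) * MvPolynomial.monomial g 1) by
    refine H (Nat.ceil (eMap n m v lam u d / δ)) d ?_
    rw [← div_le_iff₀ hδ0]
    exact Nat.le_ceil _
  intro N
  induction N with
  | zero =>
    intro d hd
    by_cases hs : SpansCone n m v lam d.support
    · refine ⟨d, hs, rfl, 0, ?_⟩
      rw [TPow_zero, MvPolynomial.C_1, one_mul]
    · exfalso
      obtain ⟨Pc, hsub, hPc⟩ := exists_primitive_subset n m v lam d.support hs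
      have hle : indOf m Pc ≤ d := by
        intro i
        rw [indOf, sumD_apply]
        split
        · next hi => exact Nat.one_le_iff_ne_zero.2 (Finsupp.mem_support_iff.1 (hsub hi))
        · exact Nat.zero_le _
      have henergy : eMap n m v lam u (d - indOf m Pc + kOf n m v lam hD Pc) =
          eMap n m v lam u d - wfun n m v lam hD Pc := by
        rw [eMap_step n m v lam u d _ _ hle]
        have := eMap_drop n m v lam hD u Pc
        linarith
      have h1 := hδle Pc hPc
      have h2 := eMap_nonneg n m v lam u hu (d - indOf m Pc + kOf n m v lam hD Pc)
      push_cast at hd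
      linarith
  | succ N ih =>
    intro d hd
    by_cases hs : SpansCone n m v lam d.support
    · refine ⟨d, hs, rfl, 0, ?_⟩
      rw [TPow_zero, MvPolynomial.C_1, one_mul]
    · obtain ⟨Pc, hsub, hPc⟩ := exists_primitive_subset n m v lam d.support hs
      set d' : Fin m →₀ ℕ := d - indOf m Pc + kOf n m v lam hD Pc with hd'
      have hle : indOf m Pc ≤ d := by
        intro i
        rw [indOf, sumD_apply]
        split
        · next hi => exact Nat.one_le_iff_ne_zero.2 (Finsupp.mem_support_iff.1 (hsub hi))
        · exact Nat.zero_le _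
      have henergy : eMap n m v lam u d' =
          eMap n m v lam u d - wfun n m v lam hD Pc := by
        rw [hd', eMap_step n m v lam u d _ _ hle]
        have := eMap_drop n m v lam hD u Pc
        linarith
      have hd'le : eMap n m v lam u d' ≤ N * δ := by
        have h1 := hδle Pc hPc
        push_cast at hd ⊢
        linarith [henergy]
      obtain ⟨g, hg1, hg2, c', hc'⟩ := ih d' hd'le
      refine ⟨g, hg1, ?_, wfun n m v lam hD Pc + c', ?_⟩
      · rw [hg2, hd', aMap_step n m v d (indOf m Pc) (kOf n m v lam hD Pc) hle,
          aMap_kOf_eq n m v lam hD Pc]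
        abel
      · rw [rewrite_step n m v lam hD d Pc hPc hsub, ← hd', map_mul, hc', ← map_mul,
          ← mul_assoc, ← MvPolynomial.C_mul, TPow_mul]


end SRAux

/-- **Statement 14** (Proposition 6.10 of Fukaya–Oh–Ohta–Ono, *Lagrangian Floer theory on
compact toric manifolds I*).  For `u ∈ Int P`, the assignment `zᵢ ↦ z̄ᵢ(u)` induces a
well-defined ring isomorphism `Λ^ℂ[z₁, …, z_m]/SR_ω(X) → Λ^ℂ[y₁^{±1}, …, y_n^{±1}]`. -/
theorem quotient_by_SR_iso_laurent
    (n m : ℕ) (hn : 1 ≤ n) (hm : 1 ≤ m)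
    (v : Fin m → Fin n → ℤ) (lam : Fin m → ℝ)
    (hDelz : IsDelzant n m v lam)
    (u : Fin n → ℝ) (hu : u ∈ interior (moment n m v lam)) :
    ∃ φ : (MvPolynomial (Fin m) Lam ⧸ SRideal n m v lam) ≃ₐ[Lam] LaurentPoly n,
      ∀ i, φ (Ideal.Quotient.mk (SRideal n m v lam) (MvPolynomial.X i)) =
        zbar n m v lam i u := by
  classical
  have huP : u ∈ moment n m v lam := interior_subset hu
  set I : Ideal (MvPolynomial (Fin m) Lam) := SRideal n m v lam with hI
  set ψ : MvPolynomial (Fin m) Lam →ₐ[Lam] LaurentPoly n := SRAux.psiHom n m v lam u with hψ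
  set φ0 : (MvPolynomial (Fin m) Lam ⧸ SRideal n m v lam) →ₐ[Lam] LaurentPoly n :=
    Ideal.Quotient.liftₐ (SRideal n m v lam) ψ (SRAux.psi_SR_zero n m v lam u) with hφ0
  have hmk : ∀ p : MvPolynomial (Fin m) Lam,
      φ0 (Ideal.Quotient.mk (SRideal n m v lam) p) = ψ p := by
    intro p
    rw [hφ0, Ideal.Quotient.liftₐ_apply]
    rfl
  -- cone representations of arbitrary integer vectors
  set kRep : (Fin n →₀ ℤ) → (Fin m →₀ ℕ) := fun a =>
    Classical.choose (SRAux.exists_cone_rep n m v lam hDelz (fun j => a j)) with hkRep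
  have hkRepSpec : ∀ a : Fin n →₀ ℤ, SpansCone n m v lam (kRep a).support ∧
      SRAux.aMap n m v (kRep a) = a := by
    intro a
    obtain ⟨h1, h2⟩ :=
      Classical.choose_spec (SRAux.exists_cone_rep n m v lam hDelz (fun j => a j))
    exact ⟨h1, Finsupp.ext (fun j => by rw [SRAux.aMap_apply]; exact h2 j)⟩
  -- surjectivity
  have hsurj : Function.Surjective φ0 := by
    intro b
    have hrange : b ∈ Set.range φ0 := by
      apply AddMonoidAlgebra.induction_on b
      · intro a
        refine ⟨Ideal.Quotient.mk (SRideal n m v lam)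
          (MvPolynomial.C (TPow (-(SRAux.eMap n m v lam u (kRep a)))) *
            MvPolynomial.monomial (kRep a) 1), ?_⟩
        rw [hmk, map_mul, SRAux.psi_C, SRAux.psi_monomial, one_mul]
        rw [AddMonoidAlgebra.coe_algebraMap]
        show AddMonoidAlgebra.single 0 _ * _ = _
        rw [AddMonoidAlgebra.single_mul_single, zero_add, (hkRepSpec a).2]
        simp only [Algebra.algebraMap_self, RingHom.id_apply]
        rw [SRAux.TPow_mul, neg_add_cancel, SRAux.TPow_zero]
        simp [AddMonoidAlgebra.of_apply]
      · rintro f g ⟨x, rfl⟩ ⟨y, rfl⟩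
        exact ⟨x + y, map_add _ _ _⟩
      · rintro r f ⟨x, rfl⟩
        exact ⟨r • x, map_smul _ _ _⟩
    exact hrange
  -- injectivity
  have hinj : Function.Injective φ0 := by
    rw [injective_iff_map_eq_zero]
    intro x hx
    obtain ⟨p, rfl⟩ := Ideal.Quotient.mk_surjective x
    -- the classes of cone monomials span the quotient
    have hspan : Ideal.Quotient.mk (SRideal n m v lam) p ∈
        Submodule.span Lam (Set.range
          (fun g : {g : Fin m →₀ ℕ // SpansCone n m v lam g.support} =>
            Ideal.Quotient.mk (SRideal n m v lam) (MvPolynomial.monomial g.1 1))) := by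
      have hps : Ideal.Quotient.mk (SRideal n m v lam) p =
          ∑ d ∈ p.support, Ideal.Quotient.mk (SRideal n m v lam)
            (MvPolynomial.monomial d (MvPolynomial.coeff d p)) := by
        conv_lhs => rw [MvPolynomial.as_sum p]
        rw [map_sum]
      rw [hps]
      apply Submodule.sum_mem
      intro d _
      obtain ⟨g, hg, _, c, hc⟩ := SRAux.exists_normal_form n m v lam hDelz u huP d
      have h1 : MvPolynomial.monomial d (MvPolynomial.coeff d p) =
          MvPolynomial.C (MvPolynomial.coeff d p) * MvPolynomial.monomial d 1 := by
        rw [MvPolynomial.C_mul_monomial, mul_one]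
      have hsmul : ∀ (r : Lam) (q : MvPolynomial (Fin m) Lam),
          r • (Ideal.Quotient.mk (SRideal n m v lam) q) =
            Ideal.Quotient.mk (SRideal n m v lam) (MvPolynomial.C r * q) := by
        intro r q
        rw [← MvPolynomial.smul_eq_C_mul, ← Ideal.Quotient.mk_eq_mk, ← Ideal.Quotient.mk_eq_mk,
          Submodule.Quotient.mk_smul]
      have h2 : Ideal.Quotient.mk (SRideal n m v lam)
          (MvPolynomial.monomial d (MvPolynomial.coeff d p)) =
          (MvPolynomial.coeff d p * TPow c) •
            Ideal.Quotient.mk (SRideal n m v lam) (MvPolynomial.monomial g 1) := by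
        rw [h1, map_mul, hc, map_mul, hsmul, MvPolynomial.C_mul, mul_assoc, map_mul, map_mul]
      rw [h2]
      exact Submodule.smul_mem _ _ (Submodule.subset_span ⟨⟨g, hg⟩, rfl⟩)
    rw [Finsupp.mem_span_range_iff_exists_finsupp] at hspan
    obtain ⟨cf, hcf⟩ := hspan
    -- apply `φ0` to the representation
    have h0 : (∑ g ∈ cf.support,
        (AddMonoidAlgebra.single (SRAux.aMap n m v g.1)
          (cf g * TPow (SRAux.eMap n m v lam u g.1)) : LaurentPoly n)) = 0 := by
      have h1 := congrArg φ0 hcf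
      rw [hx] at h1
      rw [Finsupp.sum] at h1
      rw [map_sum] at h1
      rw [← h1]
      apply Finset.sum_congr rfl
      intro g _
      rw [map_smul, hmk, SRAux.psi_monomial, one_mul]
      rw [AddMonoidAlgebra.smul_single']
    -- hence all coefficients vanish
    have hcf0 : cf = 0 := by
      ext g₀
      by_cases hg₀ : g₀ ∈ cf.support
      swap
      · exact Finsupp.notMem_support_iff.1 hg₀
      have heval : (∑ g ∈ cf.support,
          (AddMonoidAlgebra.single (SRAux.aMap n m v g.1)
            (cf g * TPow (SRAux.eMap n m v lam u g.1)) : LaurentPoly n)).coeff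
            (SRAux.aMap n m v g₀.1) = 0 := by
        rw [h0]
        rfl
      rw [AddMonoidAlgebra.coeff_sum, Finsupp.finset_sum_apply] at heval
      have hinjg : ∀ g ∈ cf.support, SRAux.aMap n m v g.1 = SRAux.aMap n m v g₀.1 → g = g₀ := by
        intro g _ hEq
        apply Subtype.ext
        apply SRAux.cone_rep_unique n m v lam hDelz g.1 g₀.1 g.2 g₀.2
        intro j
        rw [← SRAux.aMap_apply n m v g.1 j, ← SRAux.aMap_apply n m v g₀.1 j, hEq]
      rw [Finset.sum_eq_single g₀ ?_ ?_] at heval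
      · rw [AddMonoidAlgebra.coeff_single, Finsupp.single_apply, if_pos rfl] at heval
        exact SRAux.eq_zero_of_mul_TPow_eq_zero heval
      · intro g hg hne
        rw [AddMonoidAlgebra.coeff_single, Finsupp.single_apply, if_neg (fun hEq => hne (hinjg g hg hEq))]
      · intro h
        exact absurd hg₀ h
    rw [hcf0] at hcf
    rw [Finsupp.sum_zero_index] at hcf
    exact hcf.symm
  refine ⟨AlgEquiv.ofBijective φ0 ⟨hinj, hsurj⟩, ?_⟩
  intro i
  show φ0 (Ideal.Quotient.mk (SRideal n m v lam) (MvPolynomial.X i)) = zbar n m v lam i u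
  rw [hmk, SRAux.psi_X]
end
end

section
/- Let u_0 ∈ Int P. Then there exist sequences λ_i^h ∈ ℚ (i = 1, …, m) and u_0^h ∈ ℚ^n such that, setting P^h = {u ∈ ℝ^n : ⟨u, v_i⟩ − λ_i^h ≥ 0 for all i}: (1) λ_i^h → λ_i and u_0^h → u_0 as h → ∞; (2) u_0^h ∈ Int P^h; and (3) for every l, the set I_l and the space A_l^⊥ computed for (P^h, u_0^h) coincide with those computed for (P, u_0); in particular the leading term equation at u_0^h for P^h is the same system of equations as the leading term equation at u_0 for P. -/
noncomputable section

namespace ToricPotential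

/-- The affine functions `ℓᵢ(u) = ⟨u, vᵢ⟩ - λᵢ` attached to a moment polytope. -/
def ell (n m : ℕ) (v : Fin m → Fin n → ℤ) (lam : Fin m → ℝ) (i : Fin m) (u : Fin n → ℝ) : ℝ :=
  (∑ j, u j * (v i j : ℝ)) - lam i

/-- The polytope `P = {u | ℓᵢ(u) ≥ 0 for all i}`. -/
def moment (n m : ℕ) (v : Fin m → Fin n → ℤ) (lam : Fin m → ℝ) : Set (Fin n → ℝ) :=
  {u | ∀ i, 0 ≤ ell n m v lam i u}


/-- **Statement 18** (Proposition 10.8 of Fukaya–Oh–Ohta–Ono, *Lagrangian Floer theory on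
compact toric manifolds I*).  Given `u₀ ∈ Int P`, there are rational data
`λᵢ^h → λᵢ`, `u₀^h → u₀` with `u₀^h` interior to the perturbed polytope `P^h`, such that
for all `h` the ordered level-set structure of the values `ℓᵢ` at the base point is
unchanged:  `ℓᵢ(u₀) ≤ ℓᵢ'(u₀) ↔ ℓᵢ^h(u₀^h) ≤ ℓᵢ'^h(u₀^h)` for all `i, i'`.  In
particular each set `I_l` and each space `A_l^⊥`, hence the leading term equation,
computed for `(P^h, u₀^h)` coincides with the one computed for `(P, u₀)`. -/
theorem exists_rational_approximation_with_same_leading_term_data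
    (n m : ℕ) (hn : 1 ≤ n) (hm : 1 ≤ m)
    (v : Fin m → Fin n → ℤ) (lam : Fin m → ℝ)
    (hPcomp : IsCompact (moment n m v lam))
    (hPint : (interior (moment n m v lam)).Nonempty)
    (u₀ : Fin n → ℝ) (hu₀ : u₀ ∈ interior (moment n m v lam)) :
    ∃ (lamh : ℕ → Fin m → ℝ) (u₀h : ℕ → Fin n → ℝ),
      -- (2) rationality
      (∀ h i, ∃ q : ℚ, lamh h i = (q : ℝ)) ∧
      (∀ h j, ∃ q : ℚ, u₀h h j = (q : ℝ)) ∧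
      -- (1) convergence
      (∀ i, Filter.Tendsto (fun h => lamh h i) Filter.atTop (nhds (lam i))) ∧
      (∀ j, Filter.Tendsto (fun h => u₀h h j) Filter.atTop (nhds (u₀ j))) ∧
      -- (2) interiority
      (∀ h, u₀h h ∈ interior (moment n m v (lamh h))) ∧
      -- (3) the level-set structure (hence `I_l`, `A_l^⊥` and the leading term
      --     equation) is unchanged
      (∀ h i i', ell n m v lam i u₀ ≤ ell n m v lam i' u₀ ↔
        ell n m v (lamh h) i (u₀h h) ≤ ell n m v (lamh h) i' (u₀h h)) := by
  classical
  set t : Fin m → ℝ := fun i => ell n m v lam i u₀ with ht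
  have hu₀P : u₀ ∈ moment n m v lam := interior_subset hu₀
  have htnn : ∀ i, 0 ≤ t i := fun i => hu₀P i
  -- positivity of t i when v i ≠ 0
  have hpos : ∀ i, v i ≠ 0 → 0 < t i := by
    intro i hvi
    obtain ⟨ε, hε, hball⟩ := Metric.mem_nhds_iff.mp (mem_interior_iff_mem_nhds.mp hu₀)
    set C : ℝ := ∑ j, ((v i j : ℝ)) ^ 2 with hC
    have habs : ∀ j, |(v i j : ℝ)| ≤ C := by
      intro j
      have h1 : |(v i j : ℝ)| ≤ ((v i j : ℝ)) ^ 2 := by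
        rcases eq_or_ne (v i j) 0 with h | h
        · simp [h]
        · have : (1 : ℝ) ≤ |(v i j : ℝ)| := by exact_mod_cast Int.one_le_abs h
          nlinarith [abs_nonneg ((v i j : ℝ)), sq_abs ((v i j : ℝ))]
      refine le_trans h1 ?_
      rw [hC]
      exact Finset.single_le_sum (f := fun k => ((v i k : ℝ)) ^ 2)
        (fun k _ => sq_nonneg _) (Finset.mem_univ j)
    have hC1 : (1 : ℝ) ≤ C := by
      obtain ⟨j, hj⟩ := Function.ne_iff.mp hvi
      have h1 : (1 : ℝ) ≤ ((v i j : ℝ)) ^ 2 := by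
        have : (1 : ℝ) ≤ |(v i j : ℝ)| := by exact_mod_cast Int.one_le_abs hj
        nlinarith [sq_abs ((v i j : ℝ))]
      refine le_trans h1 ?_
      rw [hC]
      exact Finset.single_le_sum (f := fun k => ((v i k : ℝ)) ^ 2)
        (fun k _ => sq_nonneg _) (Finset.mem_univ j)
    have hC0 : (0 : ℝ) < C := lt_of_lt_of_le one_pos hC1
    set δ : ℝ := ε / (2 * C) with hδdef
    have hδ : 0 < δ := by positivity
    set u : Fin n → ℝ := fun j => u₀ j - δ * (v i j : ℝ) with hu
    have hmem : u ∈ Metric.ball u₀ ε := by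
      rw [Metric.mem_ball, dist_pi_lt_iff hε]
      intro j
      have : dist (u j) (u₀ j) = δ * |(v i j : ℝ)| := by
        simp only [hu, Real.dist_eq]
        rw [show u₀ j - δ * (v i j : ℝ) - u₀ j = -(δ * (v i j : ℝ)) from by ring,
          abs_neg, abs_mul, abs_of_pos hδ]
      rw [this]
      have h2 : δ * |(v i j : ℝ)| ≤ δ * C := by nlinarith [habs j]
      have h3 : δ * C = ε / 2 := by rw [hδdef]; field_simp
      linarith
    have hmom := hball hmem i
    have key : ∑ j, (u₀ j - δ * (v i j : ℝ)) * (v i j : ℝ) =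
        (∑ j, u₀ j * (v i j : ℝ)) - δ * ∑ j, ((v i j : ℝ)) ^ 2 := by
      rw [Finset.mul_sum, ← Finset.sum_sub_distrib]
      exact Finset.sum_congr rfl fun j _ => by ring
    have hval : ell n m v lam i u = t i - δ * C := by
      simp only [ell, ht, hu, hC]
      rw [key]
      ring
    rw [hval] at hmom
    nlinarith
  -- a uniform gap constant
  obtain ⟨c, hc0, hc1, hc2⟩ :
      ∃ c : ℝ, 0 < c ∧ (∀ i, v i ≠ 0 → c ≤ t i) ∧ ∀ i i', t i' < t i → c ≤ t i - t i' := by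
    set D : Finset ℝ :=
      ((((Finset.univ ×ˢ Finset.univ : Finset (Fin m × Fin m)).image fun p => t p.1 - t p.2) ∪
        (Finset.univ.image t)).filter (fun x => 0 < x)) ∪ {1} with hD
    have h1D : (1 : ℝ) ∈ D := by simp [hD]
    refine ⟨D.min' ⟨1, h1D⟩, ?_, ?_, ?_⟩
    · have hmem := D.min'_mem ⟨1, h1D⟩
      rcases Finset.mem_union.mp hmem with h | h
      · exact (Finset.mem_filter.mp h).2
      · have : D.min' ⟨1, h1D⟩ = 1 := by simpa using h
        rw [this]; exact one_pos
    · intro i hvi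
      apply Finset.min'_le
      refine Finset.mem_union_left _ (Finset.mem_filter.mpr ⟨?_, hpos i hvi⟩)
      exact Finset.mem_union_right _ (Finset.mem_image.mpr ⟨i, Finset.mem_univ _, rfl⟩)
    · intro i i' hlt
      apply Finset.min'_le
      refine Finset.mem_union_left _ (Finset.mem_filter.mpr ⟨?_, by linarith⟩)
      exact Finset.mem_union_left _ (Finset.mem_image.mpr ⟨(i, i'), by simp, rfl⟩)
  obtain ⟨N, hN⟩ := exists_nat_gt (1 / c)
  set M : ℕ → ℝ := fun h => ((h + N : ℕ) : ℝ) with hMdef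
  have hM1 : ∀ h, 1 / c < M h := by
    intro h
    refine lt_of_lt_of_le hN ?_
    simp only [hMdef]
    exact_mod_cast Nat.le_add_left N h
  have hM0 : ∀ h, 0 < M h := fun h => lt_trans (by positivity) (hM1 h)
  have hMc : ∀ h, 1 < c * M h := by
    intro h
    have := (div_lt_iff₀ hc0).mp (hM1 h)
    linarith
  -- rounding converges
  have hr : ∀ x : ℝ, Filter.Tendsto (fun h => (⌊x * M h⌋ : ℝ) / M h) Filter.atTop (nhds x) := by
    intro x
    rw [tendsto_iff_dist_tendsto_zero]
    apply squeeze_zero (g := fun h => 1 / M h) (fun h => dist_nonneg)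
    · intro h
      have hMpos := hM0 h
      have heq : (⌊x * M h⌋ : ℝ) / M h - x = ((⌊x * M h⌋ : ℝ) - x * M h) / M h := by
        field_simp
      rw [Real.dist_eq, heq, abs_div, abs_of_pos hMpos]
      have hnum : |(⌊x * M h⌋ : ℝ) - x * M h| ≤ 1 := by
        have h1 := Int.floor_le (x * M h)
        have h2 := Int.lt_floor_add_one (x * M h)
        rw [abs_le]; constructor <;> linarith
      exact div_le_div_of_nonneg_right hnum hMpos.le
    · have hcomp : Filter.Tendsto (fun h : ℕ => ((h + N : ℕ) : ℝ)) Filter.atTop Filter.atTop :=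
        tendsto_natCast_atTop_atTop.comp (Filter.tendsto_add_atTop_nat N)
      have h0 : Filter.Tendsto (fun h : ℕ => (M h)⁻¹) Filter.atTop (nhds 0) :=
        hcomp.inv_tendsto_atTop
      simpa [one_div] using h0
  -- the approximating data
  set uq : ℕ → Fin n → ℝ := fun h j => (⌊u₀ j * M h⌋ : ℝ) / M h with huq
  set L : ℕ → Fin m → ℝ :=
    fun h i => (∑ j, uq h j * (v i j : ℝ)) - (⌊t i * M h⌋ : ℝ) / M h with hL
  have heval : ∀ h i, ell n m v (L h) i (uq h) = (⌊t i * M h⌋ : ℝ) / M h := by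
    intro h i
    simp [ell, hL]
  have hnn : ∀ h i, 0 ≤ (⌊t i * M h⌋ : ℝ) / M h := by
    intro h i
    apply div_nonneg _ (hM0 h).le
    have : (0 : ℤ) ≤ ⌊t i * M h⌋ := Int.le_floor.mpr (by simpa using mul_nonneg (htnn i) (hM0 h).le)
    exact_mod_cast this
  have hrpos : ∀ h i, v i ≠ 0 → 0 < (⌊t i * M h⌋ : ℝ) / M h := by
    intro h i hvi
    apply div_pos _ (hM0 h)
    have h1 : (1 : ℝ) ≤ t i * M h := by
      have := mul_le_mul_of_nonneg_right (hc1 i hvi) (hM0 h).le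
      nlinarith [hMc h]
    have : (1 : ℤ) ≤ ⌊t i * M h⌋ := Int.le_floor.mpr (by simpa using h1)
    exact_mod_cast lt_of_lt_of_le zero_lt_one this
  refine ⟨L, uq, ?_, ?_, ?_, ?_, ?_, ?_⟩
  · -- rationality of lamh
    intro h i
    refine ⟨(∑ j, (⌊u₀ j * M h⌋ : ℚ) / ((h + N : ℕ) : ℚ) * (v i j : ℚ)) -
        (⌊t i * M h⌋ : ℚ) / ((h + N : ℕ) : ℚ), ?_⟩
    simp only [hL, huq, hMdef]
    push_cast
    ring
  · -- rationality of u₀h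
    intro h j
    refine ⟨(⌊u₀ j * M h⌋ : ℚ) / ((h + N : ℕ) : ℚ), ?_⟩
    simp only [huq, hMdef]
    push_cast
    ring
  · -- convergence of lamh
    intro i
    have hlam : lam i = (∑ j, u₀ j * (v i j : ℝ)) - t i := by simp [ht, ell]
    rw [hlam]
    apply Filter.Tendsto.sub
    · exact tendsto_finset_sum _ fun j _ => (hr (u₀ j)).mul_const _
    · exact hr (t i)
  · -- convergence of u₀h
    intro j
    exact hr (u₀ j)
  · -- interiority
    intro h
    set U : Set (Fin n → ℝ) := {u | ∀ i, v i ≠ 0 → 0 < ell n m v (L h) i u} with hU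
    have hUopen : IsOpen U := by
      have hUeq : U = ⋂ i, {u | v i ≠ 0 → 0 < ell n m v (L h) i u} := by
        ext u; simp [hU, Set.mem_iInter]
      rw [hUeq]
      apply isOpen_iInter_of_finite
      intro i
      by_cases hvi : v i = 0
      · convert isOpen_univ
        ext u; simp [hvi]
      · have heqs : {u | v i ≠ 0 → 0 < ell n m v (L h) i u} =
            (fun u => ell n m v (L h) i u) ⁻¹' Set.Ioi 0 := by
          ext u; simp [hvi]
        rw [heqs]
        refine IsOpen.preimage ?_ isOpen_Ioi
        unfold ell
        fun_prop
    have hUsub : U ⊆ moment n m v (L h) := by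
      intro u hu i
      by_cases hvi : v i = 0
      · have : ell n m v (L h) i u = ell n m v (L h) i (uq h) := by simp [ell, hvi]
        rw [this, heval h i]
        exact hnn h i
      · exact le_of_lt (hu i hvi)
    have hUmem : uq h ∈ U := by
      intro i hvi
      rw [heval h i]
      exact hrpos h i hvi
    exact interior_maximal hUsub hUopen hUmem
  · -- order structure preserved
    intro h i i'
    rw [show ell n m v lam i u₀ = t i from rfl, show ell n m v lam i' u₀ = t i' from rfl,
      heval h i, heval h i']
    constructor
    · intro hle
      have hfl : ⌊t i * M h⌋ ≤ ⌊t i' * M h⌋ :=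
        Int.floor_le_floor (mul_le_mul_of_nonneg_right hle (hM0 h).le)
      have : (⌊t i * M h⌋ : ℝ) ≤ (⌊t i' * M h⌋ : ℝ) := by exact_mod_cast hfl
      exact div_le_div_of_nonneg_right this (hM0 h).le
    · intro hle
      by_contra hlt
      push_neg at hlt
      have hgap := hc2 i i' hlt
      have h1 : t i' * M h + 1 ≤ t i * M h := by
        have hg := mul_le_mul_of_nonneg_right hgap (hM0 h).le
        nlinarith [hMc h]
      have h2 : ⌊t i' * M h⌋ + 1 ≤ ⌊t i * M h⌋ := by
        have := Int.floor_le_floor h1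
        rwa [Int.floor_add_one] at this
      rw [div_le_div_iff₀ (hM0 h) (hM0 h)] at hle
      have h3 : (⌊t i * M h⌋ : ℝ) ≤ (⌊t i' * M h⌋ : ℝ) :=
        le_of_mul_le_mul_right hle (hM0 h)
      have h4 : (⌊t i' * M h⌋ : ℝ) + 1 ≤ (⌊t i * M h⌋ : ℝ) := by exact_mod_cast h2
      linarith

end ToricPotential
end
end
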